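/- Let λ < 0, let Φ₀(r) = 2/(2+r²) and ρ₀(r) = ((2+r²)²/4) e^{−r²/4}. Then the space of C² solutions u : (1,∞) → ℝ of the eigenvalue equation −u''(r) − (4/r) u'(r) + u(r) + (r/2) u'(r) − 2r (Φ₀(r) u(r))' − 12 Φ₀(r) u(r) = λ u(r) on (1,∞) satisfying ∫₁^∞ ( u(r)² + u'(r)² ) ρ₀(r) r⁴ dr < ∞ is at most one-dimensional: any two such solutions are linearly dependent. -/

import Mathlib

open MeasureTheory

noncomputable section

/-- The radial form of the ground-state profile `Φ₀(x) = 2/(2+|x|²)`. -/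
def phi0 (r : ℝ) : ℝ := 2 / (2 + r ^ 2)

/-- The radial weight `ρ₀(r) = ((2+r²)²/4) e^{−r²/4}`. -/
def rho0 (r : ℝ) : ℝ := (2 + r ^ 2) ^ 2 / 4 * Real.exp (-(r ^ 2 / 4))

/-- Coefficient of `u'` in the normalized second-order form `u'' = Pc u' + Qc u`. -/
def Pc (r : ℝ) : ℝ := r / 2 - 4 / r - 4 * r / (2 + r ^ 2)

/-- Coefficient of `u` in the normalized second-order form `u'' = Pc u' + Qc u`. -/
def Qc (l r : ℝ) : ℝ := 1 - l + 8 * r ^ 2 / (2 + r ^ 2) ^ 2 - 24 / (2 + r ^ 2)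

lemma contOn_Pc : ContinuousOn Pc (Set.Ioi (1:ℝ)) := by
  intro r hr
  have h0 : r ≠ 0 := by have : (1:ℝ) < r := hr; linarith
  have h2 : (2:ℝ) + r ^ 2 ≠ 0 := by positivity
  apply ContinuousAt.continuousWithinAt
  unfold Pc
  apply ContinuousAt.sub
  apply ContinuousAt.sub
  · fun_prop
  · exact continuousAt_const.div continuousAt_id h0
  · exact (continuousAt_const.mul continuousAt_id).div (by fun_prop) h2

lemma contOn_Qc (l : ℝ) : ContinuousOn (Qc l) (Set.Ioi (1:ℝ)) := by
  intro r hr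
  have h2 : (2:ℝ) + r ^ 2 ≠ 0 := by positivity
  have h22 : ((2:ℝ) + r ^ 2) ^ 2 ≠ 0 := by positivity
  apply ContinuousAt.continuousWithinAt
  unfold Qc
  apply ContinuousAt.sub
  apply ContinuousAt.add
  · fun_prop
  · exact (continuousAt_const.mul (by fun_prop)).div (by fun_prop) h22
  · exact continuousAt_const.div (by fun_prop) h2

lemma hasDerivAt_phi0 (r : ℝ) : HasDerivAt phi0 (-4 * r / (2 + r ^ 2) ^ 2) r := by
  have h2 : (2 : ℝ) + r ^ 2 ≠ 0 := by positivity
  have hd : HasDerivAt (fun s : ℝ => 2 + s ^ 2) (2 * r) r := by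
    simpa using (hasDerivAt_pow 2 r).const_add 2
  have := (hasDerivAt_const r (2:ℝ)).div hd h2
  refine this.congr_deriv ?_
  field_simp; ring

lemma hasDerivAt_G (r : ℝ) (hr : 0 < r) :
    HasDerivAt (fun s => rho0 s * s ^ 4) (-(Pc r) * (rho0 r * r ^ 4)) r := by
  have h2 : (2 : ℝ) + r ^ 2 ≠ 0 := by positivity
  have h1 : HasDerivAt (fun s : ℝ => (2 + s ^ 2) ^ 2 / 4) ((2 + r ^ 2) * r) r := by
    have hd : HasDerivAt (fun s : ℝ => 2 + s ^ 2) (2 * r) r := by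
      simpa using (hasDerivAt_pow 2 r).const_add 2
    have := (hd.pow 2).div_const 4
    refine this.congr_deriv ?_
    ring
  have h3 : HasDerivAt (fun s : ℝ => Real.exp (-(s ^ 2 / 4)))
      (Real.exp (-(r ^ 2 / 4)) * (-(r / 2))) r := by
    have hd : HasDerivAt (fun s : ℝ => -(s ^ 2 / 4)) (-(r / 2)) r := by
      have := ((hasDerivAt_pow 2 r).div_const 4).neg
      refine this.congr_deriv ?_
      push_cast; ring
    exact hd.exp
  have h4 := ((h1.mul h3).mul (hasDerivAt_pow 4 r))
  refine h4.congr_deriv ?_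
  unfold rho0 Pc
  have he : Real.exp (-(r ^ 2 / 4)) ≠ 0 := Real.exp_ne_zero _
  simp only [Pi.mul_apply]
  field_simp
  ring

lemma hasDerivAt_of_contDiffOn {u : ℝ → ℝ} (hu : ContDiffOn ℝ 2 u (Set.Ioi (1:ℝ)))
    {r : ℝ} (hr : 1 < r) :
    HasDerivAt u (deriv u r) r ∧ HasDerivAt (deriv u) (deriv (deriv u) r) r := by
  have hmem : Set.Ioi (1:ℝ) ∈ nhds r := isOpen_Ioi.mem_nhds hr
  constructor
  · exact ((hu.contDiffAt hmem).differentiableAt (by norm_num)).hasDerivAt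
  · have hd : ContDiffOn ℝ 1 (deriv u) (Set.Ioi (1:ℝ)) :=
      hu.deriv_of_isOpen isOpen_Ioi (by norm_num)
    exact ((hd.contDiffAt hmem).differentiableAt (by norm_num)).hasDerivAt

lemma ode_reduce {l : ℝ} {u : ℝ → ℝ} (hu : ContDiffOn ℝ 2 u (Set.Ioi (1:ℝ)))
    (hodeu : ∀ r : ℝ, 1 < r →
      -(deriv (deriv u) r) - (4 / r) * deriv u r + u r + (r / 2) * deriv u r
        - 2 * r * deriv (fun s => phi0 s * u s) r - 12 * phi0 r * u r = l * u r)
    {r : ℝ} (hr : 1 < r) :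
    deriv (deriv u) r = Pc r * deriv u r + Qc l r * u r := by
  obtain ⟨h1, _⟩ := hasDerivAt_of_contDiffOn hu hr
  have hprod : deriv (fun s => phi0 s * u s) r
      = -4 * r / (2 + r ^ 2) ^ 2 * u r + phi0 r * deriv u r :=
    ((hasDerivAt_phi0 r).mul h1).deriv
  have h := hodeu r hr
  rw [hprod] at h
  have h2 : (2 : ℝ) + r ^ 2 ≠ 0 := by positivity
  have hr0 : r ≠ 0 := by linarith
  unfold phi0 at h
  unfold Pc Qc
  field_simp at h ⊢
  linarith

lemma ode_unique (P Q : ℝ → ℝ) (hP : ContinuousOn P (Set.Ioi 1))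
    (hQ : ContinuousOn Q (Set.Ioi 1))
    (w : ℝ → ℝ)
    (hw1 : ∀ r : ℝ, 1 < r → HasDerivAt w (deriv w r) r)
    (hw2 : ∀ r : ℝ, 1 < r → HasDerivAt (deriv w) (deriv (deriv w) r) r)
    (hode : ∀ r : ℝ, 1 < r → deriv (deriv w) r = P r * deriv w r + Q r * w r)
    (h0 : w 2 = 0) (h0' : deriv w 2 = 0) :
    ∀ r : ℝ, 1 < r → w r = 0 := by
  intro r hr
  set a : ℝ := (1 + min r 2) / 2 with ha_def
  set b : ℝ := max r 2 + 1 with hb_def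
  have hmin : 1 < min r 2 := lt_min hr one_lt_two
  have ha1 : 1 < a := by simp only [ha_def]; linarith
  have ha2 : a < min r 2 := by simp only [ha_def]; linarith
  have hab : a < b := by
    have := min_le_max (a := r) (b := 2)
    simp only [hb_def]; linarith
  have h2mem : (2:ℝ) ∈ Set.Ioo a b := by
    constructor
    · exact lt_of_lt_of_le ha2 (min_le_right _ _)
    · simp only [hb_def]; have := le_max_right r 2; linarith
  have hrmem : r ∈ Set.Ioo a b := by
    constructor
    · exact lt_of_lt_of_le ha2 (min_le_left _ _)
    · simp only [hb_def]; have := le_max_left r 2; linarith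
  have hsub : Set.Icc a b ⊆ Set.Ioi 1 := fun t ht => lt_of_lt_of_le ha1 ht.1
  obtain ⟨C, hC⟩ := (isCompact_Icc (a := a) (b := b)).exists_bound_of_continuousOn
    ((hP.mono hsub).prodMk (hQ.mono hsub))
  set M : ℝ := max C 0 with hM_def
  have hM0 : 0 ≤ M := le_max_right _ _
  have hPM : ∀ t ∈ Set.Icc a b, |P t| ≤ M ∧ |Q t| ≤ M := by
    intro t ht
    have := hC t ht
    rw [Prod.norm_def] at this
    simp only [Real.norm_eq_abs] at this
    constructor
    · exact le_trans (le_trans (le_max_left _ _) this) (le_max_left _ _)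
    · exact le_trans (le_trans (le_max_right _ _) this) (le_max_left _ _)
  set proj : ℝ → ℝ := fun t => min (max t a) b with hproj_def
  have hproj_mem : ∀ t, proj t ∈ Set.Icc a b := by
    intro t
    refine ⟨le_min (le_max_right _ _) hab.le, min_le_right _ _⟩
  have hproj_eq : ∀ t ∈ Set.Icc a b, proj t = t := by
    intro t ht
    simp only [hproj_def]
    rw [max_eq_left ht.1, min_eq_left ht.2]
  set V : ℝ → ℝ × ℝ → ℝ × ℝ :=
    fun t p => (p.2, P (proj t) * p.2 + Q (proj t) * p.1) with hV_def
  have hK0 : (0:ℝ) ≤ 1 + 2 * M := by linarith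
  set K : NNReal := ⟨1 + 2 * M, hK0⟩ with hK_def
  have hlip : ∀ t, LipschitzOnWith K (V t) Set.univ := by
    intro t
    apply LipschitzWith.lipschitzOnWith
    apply LipschitzWith.of_dist_le_mul
    intro p q
    obtain ⟨hPb, hQb⟩ := hPM (proj t) (hproj_mem t)
    have hKd : (K : ℝ) = 1 + 2 * M := rfl
    rw [Prod.dist_eq, Prod.dist_eq, hKd]
    simp only [hV_def, Real.dist_eq]
    set d := max |p.1 - q.1| |p.2 - q.2| with hd_def
    have hd1 : |p.1 - q.1| ≤ d := le_max_left _ _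
    have hd2 : |p.2 - q.2| ≤ d := le_max_right _ _
    have hd0 : 0 ≤ d := le_trans (abs_nonneg _) hd1
    apply max_le
    · nlinarith
    · have h1 : |P (proj t) * p.2 + Q (proj t) * p.1 - (P (proj t) * q.2 + Q (proj t) * q.1)|
          ≤ |P (proj t)| * |p.2 - q.2| + |Q (proj t)| * |p.1 - q.1| := by
        calc _ = |P (proj t) * (p.2 - q.2) + Q (proj t) * (p.1 - q.1)| := by ring_nf
          _ ≤ |P (proj t) * (p.2 - q.2)| + |Q (proj t) * (p.1 - q.1)| := abs_add_le _ _
          _ = |P (proj t)| * |p.2 - q.2| + |Q (proj t)| * |p.1 - q.1| := by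
              rw [abs_mul, abs_mul]
      have h2 : |P (proj t)| * |p.2 - q.2| ≤ M * d :=
        mul_le_mul hPb hd2 (abs_nonneg _) hM0
      have h3 : |Q (proj t)| * |p.1 - q.1| ≤ M * d :=
        mul_le_mul hQb hd1 (abs_nonneg _) hM0
      nlinarith
  set f : ℝ → ℝ × ℝ := fun t => (w t, deriv w t) with hf_def
  set g : ℝ → ℝ × ℝ := fun _ => ((0:ℝ), (0:ℝ)) with hg_def
  have hf : ∀ t ∈ Set.Ioo a b, HasDerivAt f (V t (f t)) t ∧ f t ∈ Set.univ := by
    intro t ht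
    refine ⟨?_, trivial⟩
    have ht1 : 1 < t := hsub (Set.Ioo_subset_Icc_self ht)
    have hd : HasDerivAt f (deriv w t, deriv (deriv w) t) t :=
      (hw1 t ht1).prodMk (hw2 t ht1)
    have heq : V t (f t) = (deriv w t, deriv (deriv w) t) := by
      simp only [hV_def, hf_def, hproj_eq t (Set.Ioo_subset_Icc_self ht), hode t ht1]
    rw [heq]
    exact hd
  have hg : ∀ t ∈ Set.Ioo a b, HasDerivAt g (V t (g t)) t ∧ g t ∈ Set.univ := by
    intro t ht
    refine ⟨?_, trivial⟩
    have heq : V t (g t) = ((0:ℝ), (0:ℝ)) := by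
      simp [hV_def, hg_def]
    rw [heq]
    exact hasDerivAt_const _ _
  have heq0 : f 2 = g 2 := by
    simp [hf_def, hg_def, h0, h0']
  have hfin := ODE_solution_unique_of_mem_Ioo (fun t _ => hlip t) h2mem hf hg heq0 hrmem
  simpa only [hf_def, hg_def, Prod.mk.injEq] using congrArg Prod.fst hfin

/-- For `λ < 0`, the space of `H¹_{ρ₀}` solutions of the eigenvalue equation
`(L₀ − λ)u = 0` on `(1,∞)` is at most one-dimensional: any two such solutions are
linearly dependent. -/
theorem eigenspace_at_most_one_dimensional
    (l : ℝ) (hl : l < 0) (u v : ℝ → ℝ)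
    (hu : ContDiffOn ℝ 2 u (Set.Ioi (1 : ℝ)))
    (hv : ContDiffOn ℝ 2 v (Set.Ioi (1 : ℝ)))
    (hodeu : ∀ r : ℝ, 1 < r →
      -(deriv (deriv u) r) - (4 / r) * deriv u r + u r + (r / 2) * deriv u r
        - 2 * r * deriv (fun s => phi0 s * u s) r - 12 * phi0 r * u r = l * u r)
    (hodev : ∀ r : ℝ, 1 < r →
      -(deriv (deriv v) r) - (4 / r) * deriv v r + v r + (r / 2) * deriv v r
        - 2 * r * deriv (fun s => phi0 s * v s) r - 12 * phi0 r * v r = l * v r)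
    (hintu : IntegrableOn (fun r => (u r ^ 2 + deriv u r ^ 2) * rho0 r * r ^ 4)
      (Set.Ioi (1 : ℝ)))
    (hintv : IntegrableOn (fun r => (v r ^ 2 + deriv v r ^ 2) * rho0 r * r ^ 4)
      (Set.Ioi (1 : ℝ))) :
    ∃ a b : ℝ, ¬(a = 0 ∧ b = 0) ∧ ∀ r : ℝ, 1 < r → a * u r + b * v r = 0 := by
  -- the Wronskian
  set W : ℝ → ℝ := fun r => u r * deriv v r - deriv u r * v r with hW_def
  have hW : ∀ r : ℝ, 1 < r → HasDerivAt W (Pc r * W r) r := by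
    intro r hr
    obtain ⟨hu1, hu2'⟩ := hasDerivAt_of_contDiffOn hu hr
    obtain ⟨hv1, hv2'⟩ := hasDerivAt_of_contDiffOn hv hr
    have hd := (hu1.mul hv2').sub (hu2'.mul hv1)
    refine hd.congr_deriv ?_
    rw [ode_reduce hu hodeu hr, ode_reduce hv hodev hr]
    simp only [hW_def]
    ring
  set F : ℝ → ℝ := fun r => W r * (rho0 r * r ^ 4) with hF_def
  have hF : ∀ r : ℝ, 1 < r → HasDerivAt F 0 r := by
    intro r hr
    have hd := (hW r hr).mul (hasDerivAt_G r (by linarith))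
    refine hd.congr_deriv ?_
    ring
  -- `F` is constant on `(1, ∞)`
  have hstep : ∀ a b : ℝ, 1 < a → a ≤ b → F b = F a := by
    intro a b ha hab
    have hcont : ContinuousOn F (Set.Icc a b) := fun t ht =>
      (hF t (lt_of_lt_of_le ha ht.1)).continuousAt.continuousWithinAt
    have hder : ∀ t ∈ Set.Ico a b, HasDerivWithinAt F 0 (Set.Ici t) t := fun t ht =>
      (hF t (lt_of_lt_of_le ha ht.1)).hasDerivWithinAt
    exact constant_of_has_deriv_right_zero hcont hder b ⟨hab, le_refl b⟩
  have hconst : ∀ r : ℝ, 1 < r → F r = F 2 := by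
    intro r hr
    rcases le_total r 2 with h | h
    · exact (hstep r 2 hr h).symm
    · exact hstep 2 r one_lt_two h
  -- the constant must vanish by integrability
  have hCint : IntegrableOn (fun _ : ℝ => F 2) (Set.Ioi (1:ℝ)) := by
    apply Integrable.mono' (hintu.add hintv) aestronglyMeasurable_const
    filter_upwards [ae_restrict_mem measurableSet_Ioi] with r hr
    have hr1 : (1:ℝ) < r := hr
    rw [← hconst r hr1]
    have hG0 : (0:ℝ) ≤ rho0 r * r ^ 4 := by unfold rho0; positivity
    have habs : ‖F r‖ = |W r| * (rho0 r * r ^ 4) := by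
      rw [Real.norm_eq_abs]
      simp only [hF_def]
      rw [abs_mul, abs_of_nonneg hG0]
    rw [habs]
    have hb : |W r| ≤ u r ^ 2 + deriv u r ^ 2 + (v r ^ 2 + deriv v r ^ 2) := by
      rw [abs_le]
      constructor <;> simp only [hW_def] <;>
        nlinarith [sq_nonneg (u r + deriv v r), sq_nonneg (u r - deriv v r),
          sq_nonneg (deriv u r + v r), sq_nonneg (deriv u r - v r)]
    calc |W r| * (rho0 r * r ^ 4)
        ≤ (u r ^ 2 + deriv u r ^ 2 + (v r ^ 2 + deriv v r ^ 2)) * (rho0 r * r ^ 4) :=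
          mul_le_mul_of_nonneg_right hb hG0
      _ = (u r ^ 2 + deriv u r ^ 2) * rho0 r * r ^ 4
          + (v r ^ 2 + deriv v r ^ 2) * rho0 r * r ^ 4 := by ring
  have hC0 : F 2 = 0 := by
    rcases (integrableOn_const_iff).mp hCint with h | h
    · exact enorm_eq_zero.mp h
    · rw [Real.volume_Ioi] at h
      exact absurd h (by simp)
  have hW2 : W 2 = 0 := by
    have hG2 : (0:ℝ) < rho0 2 * (2:ℝ) ^ 4 := by unfold rho0; positivity
    have : W 2 * (rho0 2 * (2:ℝ) ^ 4) = 0 := hC0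
    rcases mul_eq_zero.mp this with h | h
    · exact h
    · exact absurd h hG2.ne'
  -- linear combinations vanishing to second order at 2 vanish identically
  have hcomb : ∀ a b : ℝ, a * u 2 + b * v 2 = 0 → a * deriv u 2 + b * deriv v 2 = 0 →
      ∀ r : ℝ, 1 < r → a * u r + b * v r = 0 := by
    intro a b hz hz'
    set w : ℝ → ℝ := fun s => a * u s + b * v s with hw_def
    have hw1 : ∀ r : ℝ, 1 < r →
        HasDerivAt w (a * deriv u r + b * deriv v r) r := by
      intro r hr
      exact ((hasDerivAt_of_contDiffOn hu hr).1.const_mul a).add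
        ((hasDerivAt_of_contDiffOn hv hr).1.const_mul b)
    have hderiv_eq : ∀ r : ℝ, 1 < r →
        deriv w r = a * deriv u r + b * deriv v r := fun r hr => (hw1 r hr).deriv
    have hw1' : ∀ r : ℝ, 1 < r → HasDerivAt w (deriv w r) r := by
      intro r hr
      rw [hderiv_eq r hr]
      exact hw1 r hr
    have hw2 : ∀ r : ℝ, 1 < r →
        HasDerivAt (deriv w)
          (a * deriv (deriv u) r + b * deriv (deriv v) r) r := by
      intro r hr
      have hD : HasDerivAt (fun s => a * deriv u s + b * deriv v s)
          (a * deriv (deriv u) r + b * deriv (deriv v) r) r :=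
        ((hasDerivAt_of_contDiffOn hu hr).2.const_mul a).add
          ((hasDerivAt_of_contDiffOn hv hr).2.const_mul b)
      apply hD.congr_of_eventuallyEq
      filter_upwards [isOpen_Ioi.mem_nhds hr] with s hs
      exact hderiv_eq s hs
    have hode : ∀ r : ℝ, 1 < r →
        deriv (deriv w) r = Pc r * deriv w r + Qc l r * w r := by
      intro r hr
      rw [(hw2 r hr).deriv, hderiv_eq r hr, ode_reduce hu hodeu hr,
        ode_reduce hv hodev hr]
      simp only [hw_def]
      ring
    have hw2' : ∀ r : ℝ, 1 < r → HasDerivAt (deriv w) (deriv (deriv w) r) r := by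
      intro r hr
      rw [(hw2 r hr).deriv]
      exact hw2 r hr
    have h02 : w 2 = 0 := hz
    have h02' : deriv w 2 = 0 := by
      rw [hderiv_eq 2 one_lt_two]
      exact hz'
    exact ode_unique Pc (Qc l) contOn_Pc (contOn_Qc l) w hw1' hw2' hode h02 h02'
  -- case analysis
  by_cases hA : u 2 = 0 ∧ deriv u 2 = 0
  · refine ⟨1, 0, by simp, fun r hr => ?_⟩
    exact hcomb 1 0 (by rw [hA.1]; ring) (by rw [hA.2]; ring) r hr
  by_cases hB : u 2 = 0 ∧ v 2 = 0
  · refine ⟨deriv v 2, -(deriv u 2), ?_, ?_⟩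
    · rintro ⟨_, h2⟩
      exact hA ⟨hB.1, by linarith [neg_eq_zero.mp h2]⟩
    · exact hcomb _ _ (by rw [hB.1, hB.2]; ring)
        (by simp only [hW_def] at hW2; nlinarith [hW2])
  · refine ⟨v 2, -(u 2), ?_, ?_⟩
    · rintro ⟨h1, h2⟩
      exact hB ⟨neg_eq_zero.mp h2, h1⟩
    · exact hcomb _ _ (by ring)
        (by simp only [hW_def] at hW2; nlinarith [hW2])
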